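/- Translation principle, part 1: Let f : C → D be a morphism of Banach chain complexes with dual f' : D' → C'. Then H_*(f) : H_*(C) → H_*(D) is an isomorphism of vector spaces in every degree if and only if H^*(f') : H^*(D') → H^*(C') is an isomorphism of vector spaces in every degree. -/

import Mathlib

/-- Cycles of a chain complex indexed over ℕ. -/
def IsCycle (C : ℕ → Type*) [∀ n, NormedAddCommGroup (C n)] [∀ n, NormedSpace ℝ (C n)]
    (d : ∀ n, C (n + 1) →L[ℝ] C n) : ∀ n, C n → Prop
  | 0, _ => True
  | (n + 1), x => d n x = 0

/-- Coboundaries of the dual cochain complex. -/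
def IsCobdry (C : ℕ → Type*) [∀ n, NormedAddCommGroup (C n)] [∀ n, NormedSpace ℝ (C n)]
    (d : ∀ n, C (n + 1) →L[ℝ] C n) : ∀ n, (C n →L[ℝ] ℝ) → Prop
  | 0, f => f = 0
  | (n + 1), f => ∃ g : C n →L[ℝ] ℝ, f = g.comp (d n)


open ContinuousLinearMap

section analytic
open Metric Set Function Filter Finset Topology
variable {X Y : Type*} [NormedAddCommGroup X] [NormedSpace ℝ X]
    [NormedAddCommGroup Y] [NormedSpace ℝ Y]

/-- Separation step: if the "adjoint" of `T` is bounded below, then each ball of the target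
is within the closure of the image of a controlled ball. -/
lemma mem_closure_image_of_dual_bound (T : X →L[ℝ] Y) {c : ℝ} (hc : 0 < c)
    (h : ∀ φ : Y →L[ℝ] ℝ, c * ‖φ‖ ≤ ‖φ.comp T‖) {y : Y} {r : ℝ} (hr : ‖y‖ < c * r) :
    y ∈ closure (T '' Metric.closedBall 0 r) := by
  by_contra hy
  have hrpos : 0 < r := by
    by_contra hr0
    push_neg at hr0
    nlinarith [norm_nonneg y]
  have hconv : Convex ℝ (closure (T '' Metric.closedBall (0:X) r)) :=
    ((convex_closedBall (0:X) r).linear_image (T : X →ₗ[ℝ] Y)).closure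
  obtain ⟨φ, u, hKu, hyu⟩ := geometric_hahn_banach_closed_point hconv isClosed_closure hy
  have h0mem : (0 : Y) ∈ closure (T '' Metric.closedBall (0:X) r) := by
    apply subset_closure
    exact ⟨0, by simp [hrpos.le], by simp⟩
  have hu0 : 0 < u := by simpa using hKu 0 h0mem
  -- bound φ ∘ T on the ball of radius r
  have hb : ∀ x ∈ Metric.ball (0:X) r, ‖(φ.comp T) x‖ ≤ (u/r) * ‖x‖ := by
    intro x hx
    rcases eq_or_ne x 0 with rfl | hx0
    · simp
    · have hxr : ‖x‖ < r := by simpa [dist_eq_norm] using hx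
      have hmem : ∀ t : ℝ, |t| ≤ r / ‖x‖ → φ (T (t • x)) < u := by
        intro t ht
        apply hKu
        apply subset_closure
        refine ⟨t • x, ?_, rfl⟩
        simp only [Metric.mem_closedBall, dist_zero_right, norm_smul, Real.norm_eq_abs]
        have hxpos : (0:ℝ) < ‖x‖ := norm_pos_iff.2 hx0
        calc |t| * ‖x‖ ≤ (r / ‖x‖) * ‖x‖ := by
              apply mul_le_mul_of_nonneg_right ht (norm_nonneg x)
          _ = r := div_mul_cancel₀ r (ne_of_gt hxpos)
      have hxpos : (0:ℝ) < ‖x‖ := norm_pos_iff.2 hx0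
      have habs : |φ (T ((r / ‖x‖) • x))| ≤ u := by
        have h1 := hmem (r / ‖x‖) (by rw [abs_of_nonneg (by positivity)])
        have h2 := hmem (-(r / ‖x‖)) (by rw [abs_neg, abs_of_nonneg (by positivity)])
        rw [neg_smul, map_neg, map_neg] at h2
        rw [abs_le]; constructor <;> nlinarith
      have : φ (T ((r / ‖x‖) • x)) = (r / ‖x‖) * φ (T x) := by
        simp [map_smul, smul_eq_mul]
      rw [this, abs_mul, abs_of_nonneg (by positivity : (0:ℝ) ≤ r / ‖x‖),
        div_mul_eq_mul_div, div_le_iff₀ hxpos] at habs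
      have : |φ (T x)| ≤ u * ‖x‖ / r := by
        rw [le_div_iff₀ hrpos]
        nlinarith
      simpa [ContinuousLinearMap.comp_apply, Real.norm_eq_abs, div_mul_eq_mul_div] using this
  have hnorm : ‖φ.comp T‖ ≤ u / r :=
    ContinuousLinearMap.opNorm_le_of_ball hrpos (by positivity) hb
  have hφ : ‖φ‖ ≤ u / (c * r) := by
    have := (h φ).trans hnorm
    rw [← le_div_iff₀' hc] at this
    rwa [div_div, mul_comm r c] at this
  have : φ y ≤ u / (c * r) * ‖y‖ := by
    calc φ y ≤ ‖φ‖ * ‖y‖ := by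
          have := le_abs_self (φ y)
          calc φ y ≤ |φ y| := this
            _ = ‖φ y‖ := rfl
            _ ≤ ‖φ‖ * ‖y‖ := φ.le_opNorm y
      _ ≤ u / (c * r) * ‖y‖ := by
          apply mul_le_mul_of_nonneg_right hφ (norm_nonneg y)
  have hlt : u / (c * r) * ‖y‖ < u := by
    have hpos : 0 < u / (c * r) := by positivity
    calc u / (c * r) * ‖y‖ < u / (c * r) * (c * r) := by
          apply mul_lt_mul_of_pos_left hr hpos
      _ = u := div_mul_cancel₀ u (by positivity)
  linarith


/-- Iteration step of the open mapping theorem, from approximate preimages. -/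
lemma surjective_of_approx [CompleteSpace X] (T : X →L[ℝ] Y) {C : ℝ} (C0 : 0 ≤ C)
    (hC : ∀ y, ∃ x, dist (T x) y ≤ 1 / 2 * ‖y‖ ∧ ‖x‖ ≤ C * ‖y‖) :
    Function.Surjective T := by
  choose g hg using hC
  let h y := y - T (g y)
  have hle : ∀ y, ‖h y‖ ≤ 1 / 2 * ‖y‖ := by
    intro y
    rw [← dist_eq_norm, dist_comm]
    exact (hg y).1
  intro y
  have hnle : ∀ n : ℕ, ‖h^[n] y‖ ≤ (1 / 2) ^ n * ‖y‖ := by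
    intro n
    induction n with
    | zero => simp only [one_div, one_mul, iterate_zero_apply, pow_zero, le_rfl]
    | succ n IH =>
      rw [iterate_succ']
      apply le_trans (hle _) _
      rw [pow_succ', mul_assoc]
      gcongr
  let u n := g (h^[n] y)
  have ule : ∀ n, ‖u n‖ ≤ (1 / 2) ^ n * (C * ‖y‖) := fun n ↦ by
    apply le_trans (hg _).2
    calc
      C * ‖h^[n] y‖ ≤ C * ((1 / 2) ^ n * ‖y‖) := mul_le_mul_of_nonneg_left (hnle n) C0
      _ = (1 / 2) ^ n * (C * ‖y‖) := by ring
  have sNu : Summable fun n => ‖u n‖ := by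
    refine .of_nonneg_of_le (fun n => norm_nonneg _) ule ?_
    exact Summable.mul_right _ (summable_geometric_of_lt_one (by norm_num) (by norm_num))
  have su : Summable u := sNu.of_norm
  let x := tsum u
  have fsumeq : ∀ n : ℕ, T (∑ i ∈ Finset.range n, u i) = y - h^[n] y := by
    intro n
    induction n with
    | zero => simp [T.map_zero]
    | succ n IH => rw [sum_range_succ, T.map_add, IH, iterate_succ_apply', sub_add]
  have : Tendsto (fun n => ∑ i ∈ Finset.range n, u i) atTop (𝓝 x) := su.hasSum.tendsto_sum_nat
  have L₁ : Tendsto (fun n => T (∑ i ∈ Finset.range n, u i)) atTop (𝓝 (T x)) :=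
    (T.continuous.tendsto _).comp this
  simp only [fsumeq] at L₁
  have L₂ : Tendsto (fun n => y - h^[n] y) atTop (𝓝 (y - 0)) := by
    refine tendsto_const_nhds.sub ?_
    rw [tendsto_iff_norm_sub_tendsto_zero]
    simp only [sub_zero]
    refine squeeze_zero (fun _ => norm_nonneg _) hnle ?_
    rw [← zero_mul ‖y‖]
    refine (_root_.tendsto_pow_atTop_nhds_zero_of_lt_one ?_ ?_).mul tendsto_const_nhds <;> norm_num
  have feq : T x = y - 0 := tendsto_nhds_unique L₁ L₂
  rw [sub_zero] at feq
  exact ⟨x, feq⟩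


/-- A bounded operator between Banach spaces whose adjoint is bounded below is surjective. -/
lemma surjective_of_dual_bound [CompleteSpace X] (T : X →L[ℝ] Y) {c : ℝ} (hc : 0 < c)
    (h : ∀ φ : Y →L[ℝ] ℝ, c * ‖φ‖ ≤ ‖φ.comp T‖) : Function.Surjective T := by
  apply surjective_of_approx T (C := 2 / c) (by positivity)
  intro y
  rcases eq_or_ne y 0 with rfl | hy
  · exact ⟨0, by simp⟩
  have hypos : 0 < ‖y‖ := norm_pos_iff.2 hy
  have hr : ‖y‖ < c * (2 / c * ‖y‖) := by
    rw [← mul_assoc, mul_div_cancel₀ 2 (ne_of_gt hc)]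
    nlinarith
  have hmem := mem_closure_image_of_dual_bound T hc h hr
  rw [Metric.mem_closure_iff] at hmem
  obtain ⟨z, hz, hdz⟩ := hmem (1 / 2 * ‖y‖) (by positivity)
  obtain ⟨x, hx, rfl⟩ := hz
  refine ⟨x, le_of_lt (by rwa [dist_comm]), ?_⟩
  simpa [dist_eq_norm] using hx

end analytic

section analytic2
open Metric Set Function Filter Finset Topology
variable {Y W : Type*} [NormedAddCommGroup Y] [NormedSpace ℝ Y]
    [NormedAddCommGroup W] [NormedSpace ℝ W]

/-- A functional vanishing on the kernel of an operator with closed range factors through it. -/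
lemma factor_through_of_closed_range [CompleteSpace Y] [CompleteSpace W]
    (S : Y →L[ℝ] W) (hcl : IsClosed (S.range : Set W))
    (φ : Y →L[ℝ] ℝ) (hφ : ∀ y, S y = 0 → φ y = 0) : ∃ ψ : W →L[ℝ] ℝ, φ = ψ.comp S := by
  set R : Submodule ℝ W := S.range with hR
  haveI : CompleteSpace R := hcl.completeSpace_coe
  set S' : Y →L[ℝ] R := S.codRestrict R (fun y => LinearMap.mem_range_self _ y) with hS'
  have hsurj : Function.Surjective S' := by
    rintro ⟨w, y, rfl⟩
    exact ⟨y, rfl⟩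
  obtain ⟨M, hM, hpre⟩ := S'.exists_preimage_norm_le hsurj
  choose pre hpre1 hpre2 using hpre
  have hwd : ∀ y₁ y₂ : Y, S y₁ = S y₂ → φ y₁ = φ y₂ := by
    intro y₁ y₂ hS12
    have : φ (y₁ - y₂) = 0 := hφ _ (by rw [map_sub, hS12, sub_self])
    rw [map_sub] at this
    linarith
  have hSpre : ∀ w : R, S (pre w) = (w : W) := by
    intro w
    have := hpre1 w
    exact congrArg Subtype.val this
  let ρ₀ : R →ₗ[ℝ] ℝ :=
    { toFun := fun w => φ (pre w)
      map_add' := by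
        intro w₁ w₂
        have : φ (pre (w₁ + w₂)) = φ (pre w₁ + pre w₂) := by
          apply hwd
          rw [map_add, hSpre, hSpre, hSpre]
          rfl
        show φ (pre (w₁ + w₂)) = φ (pre w₁) + φ (pre w₂)
        rw [this, map_add]
      map_smul' := by
        intro a w
        have : φ (pre (a • w)) = φ (a • pre w) := by
          apply hwd
          rw [map_smul, hSpre, hSpre]
          rfl
        show φ (pre (a • w)) = (RingHom.id ℝ) a • φ (pre w)
        rw [this, map_smul]
        rfl }
  have hρ₀ : ∀ w : R, ‖ρ₀ w‖ ≤ (‖φ‖ * M) * ‖w‖ := by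
    intro w
    calc ‖φ (pre w)‖ ≤ ‖φ‖ * ‖pre w‖ := φ.le_opNorm _
      _ ≤ ‖φ‖ * (M * ‖w‖) := by
          apply mul_le_mul_of_nonneg_left (hpre2 w) (norm_nonneg _)
      _ = (‖φ‖ * M) * ‖w‖ := by ring
  let ρ : R →L[ℝ] ℝ := LinearMap.mkContinuous ρ₀ (‖φ‖ * M) hρ₀
  obtain ⟨ψ, hψ, -⟩ := exists_extension_norm_eq R ρ
  refine ⟨ψ, ?_⟩
  ext y
  have h1 : ψ (S y) = ρ (S' y) := hψ (S' y)
  have h2 : ρ (S' y) = φ (pre (S' y)) := rfl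
  have h3 : φ (pre (S' y)) = φ y := hwd _ _ (by rw [hSpre]; rfl)
  simp only [ContinuousLinearMap.comp_apply]
  rw [h1, h2, h3]

end analytic2

set_option maxHeartbeats 1600000 in
set_option synthInstance.maxHeartbeats 400000 in
set_option maxSynthPendingDepth 3 in
/-- Exactness at `Y` follows from exactness of the dual complex at `Y'` and at `X'`. -/
lemma exact_of_dual_exact {V X Y W : Type*}
    [NormedAddCommGroup V] [NormedSpace ℝ V] [NormedAddCommGroup X] [NormedSpace ℝ X]
    [NormedAddCommGroup Y] [NormedSpace ℝ Y] [NormedAddCommGroup W] [NormedSpace ℝ W]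
    [CompleteSpace X] [CompleteSpace Y]
    (u : V →L[ℝ] X) (T : X →L[ℝ] Y) (g : Y →L[ℝ] W)
    (hTu : ∀ v, T (u v) = 0) (hgT : ∀ x, g (T x) = 0)
    (h1 : ∀ φ : Y →L[ℝ] ℝ, φ.comp T = 0 → ∀ y, g y = 0 → φ y = 0)
    (h2 : ∀ χ : X →L[ℝ] ℝ, χ.comp u = 0 → ∃ φ : Y →L[ℝ] ℝ, χ = φ.comp T) :
    ∀ y, g y = 0 → ∃ x, T x = y := by
  set Z : Submodule ℝ Y := g.ker with hZ
  have hZc : IsClosed (Z : Set Y) := ContinuousLinearMap.isClosed_ker g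
  haveI : CompleteSpace Z := hZc.completeSpace_coe
  set T' : X →L[ℝ] Z := T.codRestrict Z (fun x => LinearMap.mem_ker.2 (hgT x)) with hT'
  -- precomposition with `T'` as a continuous linear map
  set Θ : (Z →L[ℝ] ℝ) →L[ℝ] (X →L[ℝ] ℝ) :=
    (ContinuousLinearMap.compSL X Z ℝ (RingHom.id ℝ) (RingHom.id ℝ)).flip T' with hΘ
  have Θapp : ∀ ρ : Z →L[ℝ] ℝ, Θ ρ = ρ.comp T' := fun ρ => rfl
  -- precomposition with `u` as a continuous linear map
  set Θu : (X →L[ℝ] ℝ) →L[ℝ] (V →L[ℝ] ℝ) :=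
    (ContinuousLinearMap.compSL V X ℝ (RingHom.id ℝ) (RingHom.id ℝ)).flip u with hΘu
  have Θuapp : ∀ χ : X →L[ℝ] ℝ, Θu χ = χ.comp u := fun χ => rfl
  set N : Submodule ℝ (X →L[ℝ] ℝ) := Θu.ker with hN
  haveI : CompleteSpace N := (ContinuousLinearMap.isClosed_ker Θu).completeSpace_coe
  -- Θ is injective
  have hinj : ∀ ρ : Z →L[ℝ] ℝ, Θ ρ = 0 → ρ = 0 := by
    intro ρ hρ
    obtain ⟨φ, hφext, -⟩ := exists_extension_norm_eq Z ρ
    have hφT : φ.comp T = 0 := by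
      ext x
      have : φ (T x) = φ ((T' x : Y)) := rfl
      simp only [ContinuousLinearMap.comp_apply, ContinuousLinearMap.zero_apply]
      rw [this, hφext (T' x)]
      have := congrArg (fun (ξ : X →L[ℝ] ℝ) => ξ x) hρ
      simpa [Θapp] using this
    ext z
    have := h1 φ hφT (z : Y) (LinearMap.mem_ker.1 z.2)
    simp only [ContinuousLinearMap.zero_apply]
    rw [← hφext z]
    exact this
  -- range of Θ is N
  have hrange : ∀ χ : X →L[ℝ] ℝ, (∃ ρ, Θ ρ = χ) ↔ χ ∈ N := by
    intro χ
    constructor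
    · rintro ⟨ρ, rfl⟩
      simp only [hN, LinearMap.mem_ker]
      change Θu (Θ ρ) = 0
      rw [Θuapp, Θapp]
      ext v
      simp only [ContinuousLinearMap.comp_apply, ContinuousLinearMap.zero_apply]
      have : T' (u v) = 0 := by
        apply Subtype.ext
        show T (u v) = ((0 : Z) : Y)
        rw [hTu v]
        rfl
      rw [this, map_zero]
    · intro hχ
      obtain ⟨φ, rfl⟩ := h2 χ (by simpa [Θuapp] using LinearMap.mem_ker.1 hχ)
      refine ⟨φ.comp (Z.subtypeL), ?_⟩
      rw [Θapp]
      ext x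
      rfl
  -- the equivalence
  set Θ' : (Z →L[ℝ] ℝ) →L[ℝ] N := Θ.codRestrict N (fun ρ => (hrange (Θ ρ)).1 ⟨ρ, rfl⟩) with hΘ'
  have hker' : Θ'.ker = ⊥ := by
    rw [ContinuousLinearMap.ker_codRestrict]
    exact LinearMap.ker_eq_bot'.2 (fun ρ h => hinj ρ h)
  have hrange' : Θ'.range = ⊤ := by
    rw [LinearMap.range_eq_top]
    rintro ⟨χ, hχ⟩
    obtain ⟨ρ, hρ⟩ := (hrange χ).2 hχ
    exact ⟨ρ, Subtype.ext hρ⟩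
  set e : (Z →L[ℝ] ℝ) ≃L[ℝ] N := ContinuousLinearEquiv.ofBijective (σ' := RingHom.id ℝ) (E := Z →L[ℝ] ℝ) (F := N) Θ' hker' hrange' with he
  set M := ‖(e.symm : N →L[ℝ] (Z →L[ℝ] ℝ))‖ with hM
  have hMnn : 0 ≤ M := norm_nonneg _
  have hbdd : ∀ ρ : Z →L[ℝ] ℝ, (M + 1)⁻¹ * ‖ρ‖ ≤ ‖ρ.comp T'‖ := by
    intro ρ
    have h1' : ‖ρ‖ = ‖e.symm (e ρ)‖ := by rw [e.symm_apply_apply]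
    have h2' : ‖e.symm (e ρ)‖ ≤ M * ‖e ρ‖ :=
      (e.symm : N →L[ℝ] (Z →L[ℝ] ℝ)).le_opNorm (e ρ)
    have h3' : ‖(e ρ : (X →L[ℝ] ℝ))‖ = ‖Θ ρ‖ := by
      have h5' : e ρ = Θ' ρ := rfl
      rw [h5', ContinuousLinearMap.coe_codRestrict_apply]
    have h4' : ‖ρ‖ ≤ (M + 1) * ‖ρ.comp T'‖ := by
      have : ‖(e ρ : (X →L[ℝ] ℝ))‖ = ‖e ρ‖ := rfl
      rw [h1']
      calc ‖e.symm (e ρ)‖ ≤ M * ‖e ρ‖ := h2'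
        _ = M * ‖Θ ρ‖ := by rw [← this, h3']
        _ = M * ‖ρ.comp T'‖ := by rw [Θapp]
        _ ≤ (M + 1) * ‖ρ.comp T'‖ := by
            apply mul_le_mul_of_nonneg_right (by linarith) (norm_nonneg _)
    rw [inv_mul_le_iff₀ (by linarith)]
    linarith [h4']
  have hsurj : Function.Surjective T' :=
    surjective_of_dual_bound T' (by positivity) hbdd
  intro y hy
  obtain ⟨x, hx⟩ := hsurj ⟨y, LinearMap.mem_ker.2 hy⟩
  exact ⟨x, congrArg Subtype.val hx⟩


/-- Exactness of the dual complex at `Y'` follows from exactness at `Y` and at `W`. -/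
lemma dual_exact_of_exact {X Y W W₂ : Type*}
    [NormedAddCommGroup X] [NormedSpace ℝ X] [NormedAddCommGroup Y] [NormedSpace ℝ Y]
    [NormedAddCommGroup W] [NormedSpace ℝ W] [NormedAddCommGroup W₂] [NormedSpace ℝ W₂]
    [CompleteSpace Y] [CompleteSpace W]
    (T : X →L[ℝ] Y) (S : Y →L[ℝ] W) (S₂ : W →L[ℝ] W₂)
    (hST : ∀ x, S (T x) = 0) (hS₂S : ∀ y, S₂ (S y) = 0)
    (h1 : ∀ y, S y = 0 → ∃ x, T x = y)
    (h2 : ∀ w, S₂ w = 0 → ∃ y, S y = w)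
    (φ : Y →L[ℝ] ℝ) (hφ : φ.comp T = 0) : ∃ ψ : W →L[ℝ] ℝ, φ = ψ.comp S := by
  have hcl : IsClosed (S.range : Set W) := by
    have : (S.range : Set W) = S₂ ⁻¹' {0} := by
      apply Set.Subset.antisymm
      · rintro w ⟨y, rfl⟩
        simp [hS₂S y]
      · intro w hw
        obtain ⟨y, hy⟩ := h2 w (by simpa using hw)
        exact ⟨y, hy⟩
    rw [this]
    exact IsClosed.preimage S₂.continuous isClosed_singleton
  apply factor_through_of_closed_range S hcl φ
  intro y hy
  obtain ⟨x, rfl⟩ := h1 y hy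
  have := congrArg (fun (ξ : X →L[ℝ] ℝ) => ξ x) hφ
  simpa using this


section main
variable (C D : ℕ → Type*) [∀ n, NormedAddCommGroup (C n)] [∀ n, NormedAddCommGroup (D n)]
    [∀ n, NormedSpace ℝ (C n)] [∀ n, NormedSpace ℝ (D n)]
    (dC : ∀ n, C (n + 1) →L[ℝ] C n) (dD : ∀ n, D (n + 1) →L[ℝ] D n)
    (f : ∀ n, C n →L[ℝ] D n)

/-- Exactness of the mapping cone of `f` at degree `0`. -/
def HP0 : Prop := ∀ w : D 0, ∃ (y : D 1) (x : C 0), dD 0 y + f 0 x = w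

/-- Exactness of the mapping cone of `f` at degree `n+1`. -/
def HP (n : ℕ) : Prop := ∀ (y : D (n+1)) (x : C n), dD n y + f n x = 0 → IsCycle C dC n x →
  ∃ (y' : D (n+2)) (x' : C (n+1)), dD (n+1) y' + f (n+1) x' = y ∧ dC n x' = -x

/-- Exactness of the dual of the mapping cone of `f` at degree `0`. -/
def HQ0 : Prop := ∀ ψ : D 0 →L[ℝ] ℝ, ψ.comp (dD 0) = 0 → ψ.comp (f 0) = 0 → ψ = 0

/-- Exactness of the dual of the mapping cone of `f` at degree `n+1`. -/
def HQ (n : ℕ) : Prop := ∀ (ψ : D (n+1) →L[ℝ] ℝ) (φ : C n →L[ℝ] ℝ),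
  ψ.comp (dD (n+1)) = 0 → ψ.comp (f (n+1)) = φ.comp (dC n) →
  ∃ ψ₀ : D n →L[ℝ] ℝ, ψ = ψ₀.comp (dD n) ∧ IsCobdry C dC n (φ - ψ₀.comp (f n))

variable {C D dC dD f}

lemma e1a (hf : ∀ n x, f n (dC n x) = dD n (f (n + 1) x))
    (hInj : ∀ n, ∀ x, IsCycle C dC n x → (∃ b, dD n b = f n x) → ∃ a, dC n a = x)
    (hSurj : ∀ n, ∀ y, IsCycle D dD n y → ∃ x, IsCycle C dC n x ∧ ∃ b, y - f n x = dD n b) :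
    HP0 C D dD f ∧ ∀ n, HP C D dC dD f n := by
  constructor
  · intro w
    obtain ⟨x, hxcyc, b, hb⟩ := hSurj 0 w trivial
    exact ⟨b, x, by rw [← hb]; abel⟩
  · intro n y x hyx hxc
    have hb : dD n (-y) = f n x := by
      rw [map_neg, neg_eq_iff_add_eq_zero]
      exact hyx
    obtain ⟨a, ha⟩ := hInj n x hxc ⟨-y, hb⟩
    have hcyc : IsCycle D dD (n+1) (y + f (n+1) a) := by
      show dD n (y + f (n+1) a) = 0
      rw [map_add, ← hf n a, ha]
      exact hyx
    obtain ⟨x₁, hx₁cyc, b, hb2⟩ := hSurj (n+1) _ hcyc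
    have hx₁ : dC n x₁ = 0 := hx₁cyc
    refine ⟨b, x₁ - a, ?_, ?_⟩
    · rw [map_sub, ← hb2]
      abel
    · rw [map_sub, hx₁, ha, zero_sub]

lemma e1b (hP0 : HP0 C D dD f) (hP : ∀ n, HP C D dC dD f n) :
    (∀ n, ∀ x, IsCycle C dC n x → (∃ b, dD n b = f n x) → ∃ a, dC n a = x) ∧
    (∀ n, ∀ y, IsCycle D dD n y → ∃ x, IsCycle C dC n x ∧ ∃ b, y - f n x = dD n b) := by
  constructor
  · rintro n x hxc ⟨b, hb⟩
    have h0 : dD n (-b) + f n x = 0 := by rw [map_neg, hb]; abel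
    obtain ⟨y', x', h1, h2⟩ := hP n (-b) x h0 hxc
    exact ⟨-x', by rw [map_neg, h2, neg_neg]⟩
  · intro n y hyc
    cases n with
    | zero =>
      obtain ⟨y₁, x, hw⟩ := hP0 y
      exact ⟨x, trivial, y₁, by rw [← hw]; abel⟩
    | succ m =>
      have hyc' : dD m y = 0 := hyc
      have h0 : dD m y + f m 0 = 0 := by rw [map_zero, add_zero]; exact hyc'
      have hzc : IsCycle C dC m (0 : C m) := by
        cases m with
        | zero => trivial
        | succ k => show dC k 0 = 0; exact map_zero _
      obtain ⟨y', x', h1, h2⟩ := hP m y 0 h0 hzc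
      refine ⟨x', ?_, y', ?_⟩
      · show dC m x' = 0
        rw [h2, neg_zero]
      · rw [← h1]; abel

lemma e2a (hf : ∀ n x, f n (dC n x) = dD n (f (n + 1) x))
    (hInj' : ∀ n, ∀ ψ : D n →L[ℝ] ℝ, ψ.comp (dD n) = 0 →
        IsCobdry C dC n (ψ.comp (f n)) → IsCobdry D dD n ψ)
    (hSurj' : ∀ n, ∀ φ : C n →L[ℝ] ℝ, φ.comp (dC n) = 0 →
        ∃ ψ : D n →L[ℝ] ℝ, ψ.comp (dD n) = 0 ∧ IsCobdry C dC n (φ - ψ.comp (f n))) :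
    HQ0 C D dD f ∧ ∀ n, HQ C D dC dD f n := by
  constructor
  · intro ψ h1 h2
    exact hInj' 0 ψ h1 h2
  · intro n ψ φ h1 h2
    obtain ⟨ψ₀, hψ₀⟩ := hInj' (n+1) ψ h1 ⟨φ, h2⟩
    have hχ : (φ - ψ₀.comp (f n)).comp (dC n) = 0 := by
      ext x
      have e1 : ψ (f (n+1) x) = φ (dC n x) := by
        have := congrArg (fun (ξ : C (n+1) →L[ℝ] ℝ) => ξ x) h2
        simpa using this
      have e2 : ψ (f (n+1) x) = ψ₀ (dD n (f (n+1) x)) := by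
        have := congrArg (fun (ξ : D (n+1) →L[ℝ] ℝ) => ξ (f (n+1) x)) hψ₀
        simpa using this
      have e3 : ψ₀ (f n (dC n x)) = ψ₀ (dD n (f (n+1) x)) := by rw [hf n x]
      simp only [ContinuousLinearMap.comp_apply, ContinuousLinearMap.sub_apply,
        ContinuousLinearMap.zero_apply]
      rw [← e1, e3, ← e2]
      ring
    obtain ⟨ρ, hρ1, hρ2⟩ := hSurj' n _ hχ
    refine ⟨ψ₀ + ρ, ?_, ?_⟩
    · rw [ContinuousLinearMap.add_comp, hρ1, add_zero]
      exact hψ₀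
    · have : φ - (ψ₀ + ρ).comp (f n) = (φ - ψ₀.comp (f n)) - ρ.comp (f n) := by
        rw [ContinuousLinearMap.add_comp]
        abel
      rw [this]
      exact hρ2

lemma e2b (hQ0 : HQ0 C D dD f) (hQ : ∀ n, HQ C D dC dD f n) :
    (∀ n, ∀ ψ : D n →L[ℝ] ℝ, ψ.comp (dD n) = 0 →
        IsCobdry C dC n (ψ.comp (f n)) → IsCobdry D dD n ψ) ∧
    (∀ n, ∀ φ : C n →L[ℝ] ℝ, φ.comp (dC n) = 0 →
        ∃ ψ : D n →L[ℝ] ℝ, ψ.comp (dD n) = 0 ∧ IsCobdry C dC n (φ - ψ.comp (f n))) := by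
  constructor
  · intro n ψ h1 hcob
    cases n with
    | zero => exact hQ0 ψ h1 hcob
    | succ m =>
      obtain ⟨g, hg⟩ := hcob
      obtain ⟨ψ₀, hψ₀, -⟩ := hQ m ψ g h1 hg
      exact ⟨ψ₀, hψ₀⟩
  · intro n φ hφ
    obtain ⟨ψ₀, hψ₀, hcob⟩ := hQ n 0 φ (by rw [ContinuousLinearMap.zero_comp])
      (by rw [ContinuousLinearMap.zero_comp, hφ])
    exact ⟨ψ₀, hψ₀.symm, hcob⟩


end main

lemma clm_prod_eval {A B : Type*} [NormedAddCommGroup A] [NormedSpace ℝ A]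
    [NormedAddCommGroup B] [NormedSpace ℝ B] (Φ : (A × B) →L[ℝ] ℝ) (a : A) (b : B) :
    Φ (a, b) = Φ (a, 0) + Φ (0, b) := by
  rw [← map_add, Prod.mk_add_mk, add_zero, zero_add]

section main
variable (C D : ℕ → Type*) [∀ n, NormedAddCommGroup (C n)] [∀ n, NormedAddCommGroup (D n)]
    [∀ n, NormedSpace ℝ (C n)] [∀ n, NormedSpace ℝ (D n)]
    (dC : ∀ n, C (n + 1) →L[ℝ] C n) (dD : ∀ n, D (n + 1) →L[ℝ] D n)
    (f : ∀ n, C n →L[ℝ] D n)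

/-- Degree-0 differential of the mapping cone of `f`. -/
def coneD0 : (D 1 × C 0) →L[ℝ] D 0 :=
  (dD 0).comp (ContinuousLinearMap.fst ℝ (D 1) (C 0)) +
    (f 0).comp (ContinuousLinearMap.snd ℝ (D 1) (C 0))

/-- Higher differentials of the mapping cone of `f`. -/
def coneDelta (n : ℕ) : (D (n+2) × C (n+1)) →L[ℝ] (D (n+1) × C n) :=
  (((dD (n+1)).comp (ContinuousLinearMap.fst ℝ (D (n+2)) (C (n+1)))) +
    ((f (n+1)).comp (ContinuousLinearMap.snd ℝ (D (n+2)) (C (n+1))))).prod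
  (-((dC n).comp (ContinuousLinearMap.snd ℝ (D (n+2)) (C (n+1)))))

variable {C D dC dD f}

lemma coneD0_apply (p : D 1 × C 0) : coneD0 C D dD f p = dD 0 p.1 + f 0 p.2 := rfl

lemma coneDelta_apply (n : ℕ) (p : D (n+2) × C (n+1)) :
    coneDelta C D dC dD f n p = (dD (n+1) p.1 + f (n+1) p.2, -(dC n p.2)) := rfl

lemma coneD0_comp_delta (hD : ∀ n x, dD n (dD (n + 1) x) = 0)
    (hf : ∀ n x, f n (dC n x) = dD n (f (n + 1) x)) (p : D 2 × C 1) :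
    coneD0 C D dD f (coneDelta C D dC dD f 0 p) = 0 := by
  rw [coneDelta_apply, coneD0_apply]
  show dD 0 (dD 1 p.1 + f 1 p.2) + f 0 (-(dC 0 p.2)) = 0
  rw [map_add, map_neg, hD 0 p.1, hf 0 p.2]
  abel

lemma coneDelta_comp_delta (hC : ∀ n x, dC n (dC (n + 1) x) = 0)
    (hD : ∀ n x, dD n (dD (n + 1) x) = 0)
    (hf : ∀ n x, f n (dC n x) = dD n (f (n + 1) x)) (n : ℕ) (p : D (n+3) × C (n+2)) :
    coneDelta C D dC dD f n (coneDelta C D dC dD f (n+1) p) = 0 := by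
  rw [coneDelta_apply, coneDelta_apply]
  apply Prod.ext
  · show dD (n+1) (dD (n+2) p.1 + f (n+2) p.2) + f (n+1) (-(dC (n+1) p.2)) = 0
    rw [map_add, map_neg, hD (n+1) p.1, hf (n+1) p.2]
    abel
  · show -(dC n (-(dC (n+1) p.2))) = 0
    rw [map_neg, hC n p.2, neg_neg]

/-- Extract the two components of a cocycle condition on the cone. -/
lemma cocycle_extract (n : ℕ) (Φ : (D (n+1) × C n) →L[ℝ] ℝ)
    (h : Φ.comp (coneDelta C D dC dD f n) = 0) :
    (Φ.comp (inl ℝ (D (n+1)) (C n))).comp (dD (n+1)) = 0 ∧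
    (Φ.comp (inl ℝ (D (n+1)) (C n))).comp (f (n+1)) =
      (Φ.comp (inr ℝ (D (n+1)) (C n))).comp (dC n) := by
  have happ : ∀ q : D (n+2) × C (n+1), Φ (dD (n+1) q.1 + f (n+1) q.2, -(dC n q.2)) = 0 := by
    intro q
    have := congrArg (fun (ξ : (D (n+2) × C (n+1)) →L[ℝ] ℝ) => ξ q) h
    simpa [coneDelta_apply] using this
  constructor
  · ext y
    have := happ (y, 0)
    simp only [map_zero, add_zero, neg_zero] at this
    simpa using this
  · ext x
    have := happ (0, x)
    simp only [map_zero, zero_add] at this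
    rw [clm_prod_eval Φ _ _] at this
    have h2 : Φ (0, -(dC n x)) = -(Φ (0, dC n x)) := by
      have : ((0 : D (n+1)), -(dC n x)) = -((0 : D (n+1)), dC n x) := by simp
      rw [this, map_neg]
    rw [h2] at this
    simp only [comp_apply, inl_apply, inr_apply]
    linarith

/-- Rebuild a functional on the cone from its two components. -/
lemma pair_eval {A B : Type*} [NormedAddCommGroup A] [NormedSpace ℝ A]
    [NormedAddCommGroup B] [NormedSpace ℝ B] (Φ : (A × B) →L[ℝ] ℝ) (p : A × B) :
    Φ p = Φ.comp (inl ℝ A B) p.1 + Φ.comp (inr ℝ A B) p.2 := by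
  simp only [comp_apply, inl_apply, inr_apply]
  rw [← clm_prod_eval]

/-- A functional on a product built from two components. -/
def pairFn {A B : Type*} [NormedAddCommGroup A] [NormedSpace ℝ A]
    [NormedAddCommGroup B] [NormedSpace ℝ B] (ψ : A →L[ℝ] ℝ) (φ : B →L[ℝ] ℝ) :
    (A × B) →L[ℝ] ℝ := ψ.comp (fst ℝ A B) + φ.comp (snd ℝ A B)

lemma pairFn_apply {A B : Type*} [NormedAddCommGroup A] [NormedSpace ℝ A]
    [NormedAddCommGroup B] [NormedSpace ℝ B] (ψ : A →L[ℝ] ℝ) (φ : B →L[ℝ] ℝ) (p : A × B) :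
    pairFn ψ φ p = ψ p.1 + φ p.2 := rfl

/-- Translation of `HP 0` into cone form. -/
lemma hp_cone0 (hP : HP C D dC dD f 0) :
    ∀ p : D 1 × C 0, coneD0 C D dD f p = 0 →
      ∃ q : D 2 × C 1, coneDelta C D dC dD f 0 q = p := by
  rintro ⟨y, x⟩ hp
  obtain ⟨y', x', h1, h2⟩ := hP y x hp trivial
  refine ⟨(y', x'), Prod.ext h1 ?_⟩
  show -(dC 0 x') = x
  rw [h2, neg_neg]

/-- Translation of `HP (n+1)` into cone form. -/
lemma hp_coneS (n : ℕ) (hP : HP C D dC dD f (n+1)) :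
    ∀ p : D (n+2) × C (n+1), coneDelta C D dC dD f n p = 0 →
      ∃ q, coneDelta C D dC dD f (n+1) q = p := by
  rintro ⟨y, x⟩ hp
  rw [coneDelta_apply, Prod.ext_iff] at hp
  obtain ⟨h1, h2⟩ := hp
  have hcyc : dC n x = 0 := by
    simp only [Prod.snd_zero, neg_eq_zero] at h2
    exact h2
  obtain ⟨y', x', g1, g2⟩ := hP y x h1 hcyc
  refine ⟨(y', x'), Prod.ext g1 ?_⟩
  show -(dC (n+1) x') = x
  rw [g2, neg_neg]

/-- Translation of `HP0` into cone form. -/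
lemma hp0_cone (hP0 : HP0 C D dD f) :
    ∀ w : D 0, ∃ p : D 1 × C 0, coneD0 C D dD f p = w := by
  intro w
  obtain ⟨y, x, hw⟩ := hP0 w
  exact ⟨(y, x), hw⟩

section complete
variable [∀ n, CompleteSpace (C n)] [∀ n, CompleteSpace (D n)]

/-- Dual exactness of the cone at positive inner degrees, from primal exactness. -/
lemma cone_dual_exact_higher (hC : ∀ n x, dC n (dC (n + 1) x) = 0)
    (hD : ∀ n x, dD n (dD (n + 1) x) = 0)
    (hf : ∀ n x, f n (dC n x) = dD n (f (n + 1) x))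
    (hP : ∀ n, HP C D dC dD f n) (n : ℕ) :
    ∀ Φ : (D (n+2) × C (n+1)) →L[ℝ] ℝ, Φ.comp (coneDelta C D dC dD f (n+1)) = 0 →
      ∃ Ψ : (D (n+1) × C n) →L[ℝ] ℝ, Φ = Ψ.comp (coneDelta C D dC dD f n) := by
  cases n with
  | zero =>
    intro Φ hΦ
    exact dual_exact_of_exact (coneDelta C D dC dD f 1) (coneDelta C D dC dD f 0)
      (coneD0 C D dD f) (coneDelta_comp_delta hC hD hf 0) (coneD0_comp_delta hD hf)
      (hp_coneS 0 (hP 1)) (hp_cone0 (hP 0)) Φ hΦ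
  | succ k =>
    intro Φ hΦ
    exact dual_exact_of_exact (coneDelta C D dC dD f (k+2)) (coneDelta C D dC dD f (k+1))
      (coneDelta C D dC dD f k) (coneDelta_comp_delta hC hD hf (k+1))
      (coneDelta_comp_delta hC hD hf k)
      (hp_coneS (k+1) (hP (k+2))) (hp_coneS k (hP (k+1))) Φ hΦ

/-- Dual exactness of the cone at degree 1, from primal exactness. -/
lemma cone_dual_exact_one (hD : ∀ n x, dD n (dD (n + 1) x) = 0)
    (hf : ∀ n x, f n (dC n x) = dD n (f (n + 1) x))
    (hP0 : HP0 C D dD f) (hP : ∀ n, HP C D dC dD f n) :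
    ∀ Φ : (D 1 × C 0) →L[ℝ] ℝ, Φ.comp (coneDelta C D dC dD f 0) = 0 →
      ∃ Ψ : D 0 →L[ℝ] ℝ, Φ = Ψ.comp (coneD0 C D dD f) := by
  intro Φ hΦ
  exact dual_exact_of_exact (coneDelta C D dC dD f 0) (coneD0 C D dD f) (0 : D 0 →L[ℝ] ℝ)
    (coneD0_comp_delta hD hf) (by intro y; simp)
    (hp_cone0 (hP 0)) (fun w _ => hp0_cone hP0 w) Φ hΦ

/-- The analytic step: primal exactness of the cone implies dual exactness. -/
lemma an1 (hC : ∀ n x, dC n (dC (n + 1) x) = 0)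
    (hD : ∀ n x, dD n (dD (n + 1) x) = 0)
    (hf : ∀ n x, f n (dC n x) = dD n (f (n + 1) x))
    (hP0 : HP0 C D dD f) (hP : ∀ n, HP C D dC dD f n) :
    HQ0 C D dD f ∧ ∀ n, HQ C D dC dD f n := by
  constructor
  · intro ψ h1 h2
    ext w
    obtain ⟨y, x, hw⟩ := hP0 w
    have e1 : ψ (dD 0 y) = 0 := by
      have := congrArg (fun (ξ : D 1 →L[ℝ] ℝ) => ξ y) h1
      simpa using this
    have e2 : ψ (f 0 x) = 0 := by
      have := congrArg (fun (ξ : C 0 →L[ℝ] ℝ) => ξ x) h2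
      simpa using this
    have : ψ (dD 0 y + f 0 x) = 0 := by rw [map_add, e1, e2, add_zero]
    rw [hw] at this
    simpa using this
  · intro n ψ φ h1 h2
    -- build the cocycle on the cone
    have hΦ : (pairFn ψ φ).comp (coneDelta C D dC dD f n) = 0 := by
      refine ContinuousLinearMap.ext fun q => ?_
      have e1 : ψ (dD (n+1) q.1) = 0 := by
        have := congrArg (fun (ξ : D (n+2) →L[ℝ] ℝ) => ξ q.1) h1
        simpa using this
      have e2 : ψ (f (n+1) q.2) = φ (dC n q.2) := by
        have := congrArg (fun (ξ : C (n+1) →L[ℝ] ℝ) => ξ q.2) h2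
        simpa using this
      simp only [comp_apply, zero_apply, coneDelta_apply, pairFn_apply]
      show ψ (dD (n+1) q.1 + f (n+1) q.2) + φ (-(dC n q.2)) = 0
      rw [map_add, map_neg, e1, e2]
      abel
    cases n with
    | zero =>
      obtain ⟨Ψ, hΨ⟩ := cone_dual_exact_one hD hf hP0 hP (pairFn ψ φ) hΦ
      refine ⟨Ψ, ?_, ?_⟩
      · ext y
        have := congrArg (fun (ξ : (D 1 × C 0) →L[ℝ] ℝ) => ξ (y, 0)) hΨ
        simp only [pairFn_apply, comp_apply, coneD0_apply, map_zero, add_zero] at this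
        simpa using this
      · show φ - Ψ.comp (f 0) = 0
        ext x
        have := congrArg (fun (ξ : (D 1 × C 0) →L[ℝ] ℝ) => ξ (0, x)) hΨ
        simp only [pairFn_apply, comp_apply, coneD0_apply, map_zero, zero_add] at this
        simp only [sub_apply, comp_apply, zero_apply]
        rw [this]
        ring
    | succ m =>
      obtain ⟨Ψ, hΨ⟩ := cone_dual_exact_higher hC hD hf hP m (pairFn ψ φ) hΦ
      refine ⟨Ψ.comp (inl ℝ (D (m+1)) (C m)), ?_, ?_⟩
      · ext y
        have := congrArg (fun (ξ : (D (m+2) × C (m+1)) →L[ℝ] ℝ) => ξ (y, 0)) hΨ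
        simp only [pairFn_apply, comp_apply, coneDelta_apply, map_zero, add_zero,
          neg_zero] at this
        simpa using this
      · refine ⟨-(Ψ.comp (inr ℝ (D (m+1)) (C m))), ?_⟩
        ext x
        have := congrArg (fun (ξ : (D (m+2) × C (m+1)) →L[ℝ] ℝ) => ξ (0, x)) hΨ
        simp only [pairFn_apply, comp_apply, coneDelta_apply, map_zero, zero_add] at this
        rw [pair_eval Ψ (f (m+1) x, -(dC m x))] at this
        simp only [comp_apply, inl_apply, inr_apply, map_neg] at this
        simp only [sub_apply, comp_apply, neg_apply, inl_apply, inr_apply]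
        linarith [this]

end complete

/-- Decompose a cone cocycle using `HQ`. -/
lemma helperA (n : ℕ) (hQn : HQ C D dC dD f n) (Φ : (D (n+1) × C n) →L[ℝ] ℝ)
    (hΦ : Φ.comp (coneDelta C D dC dD f n) = 0) :
    ∃ ψ₀ : D n →L[ℝ] ℝ, Φ.comp (inl ℝ (D (n+1)) (C n)) = ψ₀.comp (dD n) ∧
      IsCobdry C dC n (Φ.comp (inr ℝ (D (n+1)) (C n)) - ψ₀.comp (f n)) := by
  obtain ⟨hA, hB⟩ := cocycle_extract n Φ hΦ
  exact hQn _ _ hA hB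

/-- Cone cocycles at inner degrees are coboundaries, via `HQ`. -/
lemma helperB (n : ℕ) (hQ1 : HQ C D dC dD f (n+1)) (χ : (D (n+2) × C (n+1)) →L[ℝ] ℝ)
    (hχ : χ.comp (coneDelta C D dC dD f (n+1)) = 0) :
    ∃ Φ : (D (n+1) × C n) →L[ℝ] ℝ, χ = Φ.comp (coneDelta C D dC dD f n) := by
  obtain ⟨ψ₀, hψ₀, g₀, hg₀⟩ := helperA (n+1) hQ1 χ hχ
  refine ⟨pairFn ψ₀ (-g₀), ContinuousLinearMap.ext fun p => ?_⟩
  rw [pair_eval χ p]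
  have e1 : χ (inl ℝ (D (n+2)) (C (n+1)) p.1) = ψ₀ (dD (n+1) p.1) := by
    have := congrArg (fun (ξ : D (n+2) →L[ℝ] ℝ) => ξ p.1) hψ₀
    simpa using this
  have e2 : χ (inr ℝ (D (n+2)) (C (n+1)) p.2) - ψ₀ (f (n+1) p.2) = g₀ (dC n p.2) := by
    have := congrArg (fun (ξ : C (n+1) →L[ℝ] ℝ) => ξ p.2) hg₀
    simpa using this
  have e3 : (pairFn ψ₀ (-g₀)) (coneDelta C D dC dD f n p)
      = ψ₀ (dD (n+1) p.1 + f (n+1) p.2) + g₀ (dC n p.2) := by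
    simp only [coneDelta_apply, pairFn_apply, neg_apply, map_neg, neg_neg]
  simp only [comp_apply] at e1 e2 ⊢
  rw [e3, map_add]
  linarith
  
/-- Cone cocycles at degree 1 are coboundaries, via `HQ 0`. -/
lemma helperB0 (hQ0' : HQ C D dC dD f 0) (χ : (D 1 × C 0) →L[ℝ] ℝ)
    (hχ : χ.comp (coneDelta C D dC dD f 0) = 0) :
    ∃ Φ : D 0 →L[ℝ] ℝ, χ = Φ.comp (coneD0 C D dD f) := by
  obtain ⟨ψ₀, hψ₀, hcob⟩ := helperA 0 hQ0' χ hχ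
  have hcob' : χ.comp (inr ℝ (D 1) (C 0)) - ψ₀.comp (f 0) = 0 := hcob
  refine ⟨ψ₀, ContinuousLinearMap.ext fun p => ?_⟩
  rw [pair_eval χ p]
  have e1 : χ (inl ℝ (D 1) (C 0) p.1) = ψ₀ (dD 0 p.1) := by
    have := congrArg (fun (ξ : D 1 →L[ℝ] ℝ) => ξ p.1) hψ₀
    simpa using this
  have e2 : χ (inr ℝ (D 1) (C 0) p.2) - ψ₀ (f 0 p.2) = 0 := by
    have := congrArg (fun (ξ : C 0 →L[ℝ] ℝ) => ξ p.2) hcob'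
    simpa using this
  have e3 : ψ₀ (coneD0 C D dD f p) = ψ₀ (dD 0 p.1 + f 0 p.2) := rfl
  simp only [comp_apply] at e1 e2 ⊢
  rw [e3, map_add]
  linarith

/-- Functionals killed by the cone differential vanish on degree-0 "cycles", via `HQ0`. -/
lemma helperH10 (hQ0 : HQ0 C D dD f) (φ : D 0 →L[ℝ] ℝ)
    (hφ : φ.comp (coneD0 C D dD f) = 0) : φ = 0 := by
  apply hQ0
  · ext y
    have := congrArg (fun (ξ : (D 1 × C 0) →L[ℝ] ℝ) => ξ (y, 0)) hφ
    simpa [coneD0_apply] using this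
  · ext x
    have := congrArg (fun (ξ : (D 1 × C 0) →L[ℝ] ℝ) => ξ (0, x)) hφ
    simpa [coneD0_apply] using this

/-- Cone cocycles vanish on cycles for the bottom inner degree. -/
lemma helperH1B (hQ0' : HQ C D dC dD f 0) (Φ : (D 1 × C 0) →L[ℝ] ℝ)
    (hΦ : Φ.comp (coneDelta C D dC dD f 0) = 0) :
    ∀ p : D 1 × C 0, coneD0 C D dD f p = 0 → Φ p = 0 := by
  obtain ⟨ψ₀, hψ₀, hcob⟩ := helperA 0 hQ0' Φ hΦ
  have hcob' : Φ.comp (inr ℝ (D 1) (C 0)) - ψ₀.comp (f 0) = 0 := hcob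
  intro p hp
  rw [pair_eval Φ p]
  have e1 : Φ (inl ℝ (D 1) (C 0) p.1) = ψ₀ (dD 0 p.1) := by
    have := congrArg (fun (ξ : D 1 →L[ℝ] ℝ) => ξ p.1) hψ₀
    simpa using this
  have e2 : Φ (inr ℝ (D 1) (C 0) p.2) - ψ₀ (f 0 p.2) = 0 := by
    have := congrArg (fun (ξ : C 0 →L[ℝ] ℝ) => ξ p.2) hcob'
    simpa using this
  have e4 : ψ₀ (dD 0 p.1 + f 0 p.2) = 0 := by
    have : dD 0 p.1 + f 0 p.2 = 0 := hp
    rw [this, map_zero]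
  rw [map_add] at e4
  simp only [comp_apply] at e1 e2 ⊢
  linarith

/-- Cone cocycles vanish on cycles at higher inner degrees. -/
lemma helperH1A (m : ℕ) (hQm : HQ C D dC dD f (m+1)) (Φ : (D (m+2) × C (m+1)) →L[ℝ] ℝ)
    (hΦ : Φ.comp (coneDelta C D dC dD f (m+1)) = 0) :
    ∀ p : D (m+2) × C (m+1), coneDelta C D dC dD f m p = 0 → Φ p = 0 := by
  obtain ⟨ψ₀, hψ₀, g₀, hg₀⟩ := helperA (m+1) hQm Φ hΦ
  intro p hp
  rw [coneDelta_apply, Prod.ext_iff] at hp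
  have hp1 : dD (m+1) p.1 + f (m+1) p.2 = 0 := hp.1
  have hp2 : dC m p.2 = 0 := by
    have := hp.2
    simp only [Prod.snd_zero, neg_eq_zero] at this
    exact this
  rw [pair_eval Φ p]
  have e1 : Φ (inl ℝ (D (m+2)) (C (m+1)) p.1) = ψ₀ (dD (m+1) p.1) := by
    have := congrArg (fun (ξ : D (m+2) →L[ℝ] ℝ) => ξ p.1) hψ₀
    simpa using this
  have e2 : Φ (inr ℝ (D (m+2)) (C (m+1)) p.2) - ψ₀ (f (m+1) p.2) = g₀ (dC m p.2) := by
    have := congrArg (fun (ξ : C (m+1) →L[ℝ] ℝ) => ξ p.2) hg₀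
    simpa using this
  rw [hp2, map_zero] at e2
  have e4 : ψ₀ (dD (m+1) p.1 + f (m+1) p.2) = 0 := by rw [hp1, map_zero]
  rw [map_add] at e4
  simp only [comp_apply] at e1 e2 ⊢
  linarith

section complete2
variable [∀ n, CompleteSpace (C n)] [∀ n, CompleteSpace (D n)]

/-- The analytic step: dual exactness of the cone implies primal exactness. -/
lemma an2 (hC : ∀ n x, dC n (dC (n + 1) x) = 0)
    (hD : ∀ n x, dD n (dD (n + 1) x) = 0)
    (hf : ∀ n x, f n (dC n x) = dD n (f (n + 1) x))
    (hQ0 : HQ0 C D dD f) (hQ : ∀ n, HQ C D dC dD f n) :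
    HP0 C D dD f ∧ ∀ n, HP C D dC dD f n := by
  constructor
  · have key := exact_of_dual_exact (coneDelta C D dC dD f 0) (coneD0 C D dD f)
      (0 : D 0 →L[ℝ] ℝ) (coneD0_comp_delta hD hf) (fun x => rfl)
      (fun φ hφ y _ => by rw [helperH10 hQ0 φ hφ]; rfl)
      (helperB0 (hQ 0))
    intro w
    obtain ⟨p, hp⟩ := key w rfl
    exact ⟨p.1, p.2, hp⟩
  · intro n
    cases n with
    | zero =>
      have key := exact_of_dual_exact (coneDelta C D dC dD f 1) (coneDelta C D dC dD f 0)
        (coneD0 C D dD f) (coneDelta_comp_delta hC hD hf 0) (coneD0_comp_delta hD hf)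
        (helperH1B (hQ 0)) (helperB 0 (hQ 1))
      intro y x h _
      obtain ⟨q, hq⟩ := key (y, x) h
      rw [coneDelta_apply, Prod.ext_iff] at hq
      refine ⟨q.1, q.2, hq.1, ?_⟩
      have h2 : -(dC 0 q.2) = x := hq.2
      rw [← h2, neg_neg]
    | succ m =>
      have key := exact_of_dual_exact (coneDelta C D dC dD f (m+2)) (coneDelta C D dC dD f (m+1))
        (coneDelta C D dC dD f m) (coneDelta_comp_delta hC hD hf (m+1))
        (coneDelta_comp_delta hC hD hf m)
        (helperH1A m (hQ (m+1))) (helperB (m+1) (hQ (m+2)))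
      intro y x h hcyc
      have hcyc' : dC m x = 0 := hcyc
      have hzero : coneDelta C D dC dD f m (y, x) = 0 := by
        rw [coneDelta_apply]
        apply Prod.ext
        · exact h
        · show -(dC m x) = 0
          rw [hcyc', neg_zero]
      obtain ⟨q, hq⟩ := key (y, x) hzero
      rw [coneDelta_apply, Prod.ext_iff] at hq
      refine ⟨q.1, q.2, hq.1, ?_⟩
      have h2 : -(dC (m+1) q.2) = x := hq.2
      rw [← h2, neg_neg]

end complete2
end main


/-- Translation principle, part 1: for a morphism `f : C → D` of Banach
chain complexes with dual `f' : D' → C'`, the induced map `H_*(f)` is an isomorphism of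
vector spaces in every degree iff `H^*(f')` is an isomorphism of vector spaces in every
degree. -/
theorem stmt5
    (C D : ℕ → Type*) [∀ n, NormedAddCommGroup (C n)] [∀ n, NormedAddCommGroup (D n)]
    [∀ n, NormedSpace ℝ (C n)] [∀ n, NormedSpace ℝ (D n)]
    [∀ n, CompleteSpace (C n)] [∀ n, CompleteSpace (D n)]
    (dC : ∀ n, C (n + 1) →L[ℝ] C n) (dD : ∀ n, D (n + 1) →L[ℝ] D n)
    (hC : ∀ n x, dC n (dC (n + 1) x) = 0) (hD : ∀ n x, dD n (dD (n + 1) x) = 0)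
    (f : ∀ n, C n →L[ℝ] D n)
    (hf : ∀ n x, f n (dC n x) = dD n (f (n + 1) x)) :
    -- `H_*(f)` is injective and surjective in every degree ...
    ((∀ n, ∀ x, IsCycle C dC n x → (∃ b, dD n b = f n x) → ∃ a, dC n a = x) ∧
     (∀ n, ∀ y, IsCycle D dD n y → ∃ x, IsCycle C dC n x ∧ ∃ b, y - f n x = dD n b)) ↔
    -- ... iff `H^*(f')` is injective and surjective in every degree.
    ((∀ n, ∀ ψ : D n →L[ℝ] ℝ, ψ.comp (dD n) = 0 →
        IsCobdry C dC n (ψ.comp (f n)) → IsCobdry D dD n ψ) ∧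
     (∀ n, ∀ φ : C n →L[ℝ] ℝ, φ.comp (dC n) = 0 →
        ∃ ψ : D n →L[ℝ] ℝ, ψ.comp (dD n) = 0 ∧ IsCobdry C dC n (φ - ψ.comp (f n)))) := by
  constructor
  · rintro ⟨hInj, hSurj⟩
    obtain ⟨hP0, hP⟩ := e1a hf hInj hSurj
    obtain ⟨hQ0, hQ⟩ := an1 hC hD hf hP0 hP
    exact e2b hQ0 hQ
  · rintro ⟨hInj', hSurj'⟩
    obtain ⟨hQ0, hQ⟩ := e2a hf hInj' hSurj'
    obtain ⟨hP0, hP⟩ := an2 hC hD hf hQ0 hQ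
    exact e1b hP0 hP
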